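/- Let k, n ∈ ℕ, A ∈ ℤ^{n×k} and b ∈ ℤ^n, and let L = {x ∈ ℕ^k : A·x = b} be the set of nonnegative integer solutions of the linear Diophantine system A·x = b. Then there exist finite sets B, P ⊆ ℕ^k such that L = B + P*, where P* denotes the set of all finite sums (with repetitions allowed, including the empty sum 0) of elements of P. -/

import Mathlib

namespace DiophHL

variable {k : ℕ}

/-- Minimal elements of a set in `ℕ^k` form a finite set (Dickson's lemma). -/
lemma minimals_finite (S : Set (Fin k → ℕ)) :
    {m | m ∈ S ∧ ∀ y ∈ S, y ≤ m → m ≤ y}.Finite := by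
  have hpwo : Set.IsPWO {m | m ∈ S ∧ ∀ y ∈ S, y ≤ m → m ≤ y} :=
    Set.isPWO_of_wellQuasiOrderedLE _
  refine IsAntichain.finite_of_partiallyWellOrderedOn ?_ hpwo
  intro a ha b hb hne hab
  exact hne (le_antisymm hab (hb.2 a ha.1 hab))

/-- Every element of a set in `ℕ^k` lies above a minimal element. -/
lemma exists_minimal_le (S : Set (Fin k → ℕ)) :
    ∀ x ∈ S, ∃ m, m ∈ S ∧ m ≤ x ∧ ∀ y ∈ S, y ≤ m → m ≤ y := by
  suffices h : ∀ N x, x ∈ S → Finset.univ.sum x = N →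
      ∃ m, m ∈ S ∧ m ≤ x ∧ ∀ y ∈ S, y ≤ m → m ≤ y by
    intro x hx; exact h _ x hx rfl
  intro N
  induction N using Nat.strong_induction_on with
  | _ N ih =>
    intro x hx hN
    by_cases hmin : ∀ y ∈ S, y ≤ x → x ≤ y
    · exact ⟨x, hx, le_refl x, hmin⟩
    · push_neg at hmin
      obtain ⟨y, hyS, hyx, hxy⟩ := hmin
      have hne : y ≠ x := fun h => hxy (h ▸ le_refl x)
      obtain ⟨i, hi⟩ := Function.ne_iff.mp hne
      have hlt : Finset.univ.sum y < N := by
        subst hN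
        exact Finset.sum_lt_sum (fun i _ => hyx i)
          ⟨i, Finset.mem_univ i, lt_of_le_of_ne (hyx i) hi⟩
      obtain ⟨m, hmS, hmy, hmmin⟩ := ih _ hlt y hyS rfl
      exact ⟨m, hmS, le_trans hmy hyx, hmmin⟩

end DiophHL

theorem diophantine_solutions_hybrid_linear (k n : ℕ)
    (A : Matrix (Fin n) (Fin k) ℤ) (b : Fin n → ℤ) :
    ∃ B P : Finset (Fin k → ℕ),
      ∀ x : Fin k → ℕ,
        A.mulVec (fun j => (x j : ℤ)) = b ↔
          ∃ b₀ ∈ B, ∃ p ∈ AddSubmonoid.closure (P : Set (Fin k → ℕ)), x = b₀ + p := by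
  classical
  set cv : (Fin k → ℕ) → (Fin k → ℤ) := fun x j => (x j : ℤ) with hcv
  have cv_add : ∀ x y : Fin k → ℕ, cv (x + y) = cv x + cv y := by
    intro x y; funext j; simp [hcv]
  have cv_zero : cv 0 = 0 := by funext j; simp [hcv]
  set L : Set (Fin k → ℕ) := {x | A.mulVec (cv x) = b} with hL
  set H : Set (Fin k → ℕ) := {x | A.mulVec (cv x) = 0} with hH
  -- cancellation: sum in the relevant set splits
  have split : ∀ (m x : Fin k → ℕ), m ≤ x → x = m + (x - m) := by
    intro m x hmx; funext j; exact (Nat.add_sub_cancel' (hmx j)).symm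
  have hBfin := DiophHL.minimals_finite L
  have hPfin := DiophHL.minimals_finite (H \ {0})
  set P : Finset (Fin k → ℕ) := hPfin.toFinset with hP
  -- every homogeneous solution is in the closure of P
  have hom_mem : ∀ d ∈ H, d ∈ AddSubmonoid.closure (P : Set (Fin k → ℕ)) := by
    suffices h : ∀ N d, d ∈ H → Finset.univ.sum d = N →
        d ∈ AddSubmonoid.closure (P : Set (Fin k → ℕ)) by
      intro d hd; exact h _ d hd rfl
    intro N
    induction N using Nat.strong_induction_on with
    | _ N ih =>
      intro d hd hN
      by_cases hd0 : d = 0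
      · subst hd0; exact zero_mem _
      · obtain ⟨p, hpH, hpd, hpmin⟩ :=
          DiophHL.exists_minimal_le (H \ {0}) d ⟨hd, hd0⟩
        have hpP : p ∈ P := by
          rw [hP, Set.Finite.mem_toFinset]; exact ⟨hpH, hpmin⟩
        have hsplit := split p d hpd
        have hdpH : d - p ∈ H := by
          have h2 : A.mulVec (cv p) + A.mulVec (cv (d - p)) = 0 := by
            rw [← Matrix.mulVec_add, ← cv_add, ← hsplit]; exact hd
          have hpe : A.mulVec (cv p) = 0 := hpH.1
          show A.mulVec (cv (d - p)) = 0
          rw [hpe, zero_add] at h2; exact h2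
        have hp0 : p ≠ 0 := hpH.2
        obtain ⟨i, hi⟩ := Function.ne_iff.mp hp0
        have hlt : Finset.univ.sum (d - p) < N := by
          subst hN
          refine Finset.sum_lt_sum (fun j _ => Nat.sub_le _ _)
            ⟨i, Finset.mem_univ i, ?_⟩
          simp only [Pi.zero_apply] at hi
          have : 0 < p i := Nat.pos_of_ne_zero hi
          have hpd' := hpd i
          show d i - p i < d i
          exact Nat.sub_lt (lt_of_lt_of_le this hpd') this
        have hrec := ih _ hlt (d - p) hdpH rfl
        rw [hsplit]
        exact add_mem (AddSubmonoid.subset_closure hpP) hrec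
  refine ⟨hBfin.toFinset, P, fun x => ⟨fun hx => ?_, fun hx => ?_⟩⟩
  · obtain ⟨m, hmL, hmx, hmmin⟩ := DiophHL.exists_minimal_le L x hx
    refine ⟨m, by rw [Set.Finite.mem_toFinset]; exact ⟨hmL, hmmin⟩, x - m, ?_, split m x hmx⟩
    refine hom_mem _ ?_
    have h2 : A.mulVec (cv m) + A.mulVec (cv (x - m)) = b := by
      rw [← Matrix.mulVec_add, ← cv_add, ← split m x hmx]; exact hx
    rw [hL, Set.mem_setOf_eq] at hmL
    rw [hH, Set.mem_setOf_eq]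
    rw [hmL] at h2
    exact (add_eq_left).mp h2
  · obtain ⟨b₀, hb₀, p, hp, rfl⟩ := hx
    rw [Set.Finite.mem_toFinset] at hb₀
    have hb₀L : A.mulVec (cv b₀) = b := hb₀.1
    have hpH : A.mulVec (cv p) = 0 := by
      induction hp using AddSubmonoid.closure_induction with
      | mem q hq =>
        rw [hP, Set.Finite.coe_toFinset] at hq
        exact hq.1.1
      | zero => rw [cv_zero, Matrix.mulVec_zero]
      | add a c _ _ ha hc => rw [cv_add, Matrix.mulVec_add, ha, hc, add_zero]
    show A.mulVec (cv (b₀ + p)) = b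
    rw [cv_add, Matrix.mulVec_add, hb₀L, hpH, add_zero]
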